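/- There exists a cake-division instance with 3 agents, strictly positive subjective density functions u_1(x) = 5/3 − (8/3)·min(x, 1−x), u_2(x) = 3/2 − 2·min(x, 1−x), u_3(x) = 1 on [0,1], such that no allocation of the cake into three pieces is simultaneously balanced (each piece has Lebesgue measure 1/3), envy-free with respect to the subjective utilities, and Pareto optimal with respect to the subjective utilities. -/

import Mathlib

open MeasureTheory Set

/-- The three strictly positive subjective densities on the cake `[0,1]`. -/
noncomputable def dens : Fin 3 → ℝ → ℝ :=
  ![fun x => 5 / 3 - 8 / 3 * min x (1 - x),
    fun x => 3 / 2 - 2 * min x (1 - x),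
    fun _ => 1]

lemma dens0_apply (x : ℝ) : dens 0 x = 5 / 3 - 8 / 3 * min x (1 - x) := rfl
lemma dens1_apply (x : ℝ) : dens 1 x = 3 / 2 - 2 * min x (1 - x) := rfl
lemma dens2_apply (x : ℝ) : dens 2 x = 1 := rfl

lemma dens_cont (k : Fin 3) : Continuous (dens k) := by
  fin_cases k <;> simp [dens] <;> fun_prop

lemma dens_pos (k : Fin 3) (x : ℝ) : 0 < dens k x := by
  have hm : min x (1 - x) ≤ 1 / 2 := by
    rcases le_total x (1 - x) with h | h
    · rw [min_eq_left h]; linarith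
    · rw [min_eq_right h]; linarith
  fin_cases k <;> simp [dens] <;> nlinarith

lemma dens_le_two (k : Fin 3) {x : ℝ} (hx : x ∈ Icc (0:ℝ) 1) : dens k x ≤ 2 := by
  have hm : (0:ℝ) ≤ min x (1 - x) := le_min hx.1 (by linarith [hx.2])
  fin_cases k <;> simp [dens] <;> nlinarith

lemma dens_intOn (k : Fin 3) {S : Set ℝ} (hS : S ⊆ Icc 0 1) :
    IntegrableOn (dens k) S volume :=
  ((dens_cont k).integrableOn_Icc (a := 0) (b := 1)).mono_set hS

/-- strict positivity of a set integral -/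
lemma setIntegral_pos {h : ℝ → ℝ} {Q : Set ℝ} (hQm : MeasurableSet Q)
    (hQ : Q ⊆ Icc 0 1) (hpos : ∀ x ∈ Q, 0 < h x) (hq : volume Q ≠ 0)
    (hint : IntegrableOn h Q volume) : 0 < ∫ x in Q, h x := by
  rw [setIntegral_pos_iff_support_of_nonneg_ae
      ((ae_restrict_iff' hQm).2 (ae_of_all _ fun x hx => (hpos x hx).le)) hint]
  refine lt_of_lt_of_le ?_ (measure_mono (?_ : Q ⊆ _))
  · exact (zero_le).lt_of_ne (Ne.symm hq)
  · intro x hx; exact ⟨ne_of_gt (hpos x hx), hx⟩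

/-- a measurable subset with any prescribed sub-integral of a nonneg bounded density -/
lemma exists_subset_integral (g : ℝ → ℝ) (hgc : Continuous g)
    (hg0 : ∀ x, 0 ≤ g x) (hg2 : ∀ x, x ∈ Icc (0:ℝ) 1 → g x ≤ 2)
    {S : Set ℝ} (hSm : MeasurableSet S) (hS : S ⊆ Icc 0 1)
    {c : ℝ} (hc0 : 0 ≤ c) (hc : c ≤ ∫ x in S, g x) :
    ∃ T, MeasurableSet T ∧ T ⊆ S ∧ ∫ x in T, g x = c := by
  have hintS : ∀ (U : Set ℝ), U ⊆ Icc 0 1 → IntegrableOn g U volume :=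
    fun U hU => (hgc.integrableOn_Icc (a := 0) (b := 1)).mono_set hU
  set f : ℝ → ℝ := fun t => ∫ x in S ∩ Iic t, g x with hf
  have hsub : ∀ t, S ∩ Iic t ⊆ Icc 0 1 := fun t => (inter_subset_left).trans hS
  have key : ∀ s t : ℝ, s ≤ t → f s ≤ f t ∧ f t - f s ≤ 2 * (t - s) := by
    intro s t hst
    have hsplit : S ∩ Iic t = (S ∩ Iic s) ∪ (S ∩ Ioc s t) := by
      rw [← inter_union_distrib_left]
      congr 1
      rw [Iic_union_Ioc_eq_Iic hst]
    have hdisj : Disjoint (S ∩ Iic s) (S ∩ Ioc s t) := by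
      apply Disjoint.mono inter_subset_right inter_subset_right
      exact Iic_disjoint_Ioc le_rfl
    have hft : f t = f s + ∫ x in S ∩ Ioc s t, g x := by
      rw [hf]; simp only
      rw [hsplit, setIntegral_union hdisj (hSm.inter measurableSet_Ioc)
        (hintS _ (hsub s)) (hintS _ ((inter_subset_left).trans hS))]
    have h1 : 0 ≤ ∫ x in S ∩ Ioc s t, g x :=
      setIntegral_nonneg (hSm.inter measurableSet_Ioc) fun x _ => hg0 x
    have h2 : ∫ x in S ∩ Ioc s t, g x ≤ 2 * (t - s) := by
      calc ∫ x in S ∩ Ioc s t, g x ≤ ∫ x in S ∩ Ioc s t, (2:ℝ) := by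
            apply setIntegral_mono_on (hintS _ ((inter_subset_left).trans hS))
              (integrableOn_const (lt_of_le_of_lt
                (measure_mono ((inter_subset_left).trans hS)) (by simp)).ne)
              (hSm.inter measurableSet_Ioc)
            exact fun x hx => hg2 x (hS hx.1)
        _ = 2 * (volume (S ∩ Ioc s t)).toReal := by simp [mul_comm, measureReal_def]
        _ ≤ 2 * (t - s) := by
            have : volume (S ∩ Ioc s t) ≤ volume (Ioc s t) := measure_mono inter_subset_right
            rw [Real.volume_Ioc] at this
            have := ENNReal.toReal_mono (by simp) this
            rw [ENNReal.toReal_ofReal (by linarith)] at this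
            linarith
    constructor <;> linarith
  have hlip : LipschitzWith 2 f := by
    apply LipschitzWith.of_dist_le_mul
    intro s t
    rcases le_total s t with h | h
    · rw [Real.dist_eq, Real.dist_eq, abs_of_nonpos (by linarith [(key s t h).1]),
        abs_of_nonpos (by linarith)]
      have := (key s t h).2; push_cast; linarith
    · rw [Real.dist_eq, Real.dist_eq, abs_of_nonneg (by linarith [(key t s h).1]),
        abs_of_nonneg (by linarith)]
      have := (key t s h).2; push_cast; linarith
  have hf0 : f 0 = 0 := by
    rw [hf]; simp only
    apply setIntegral_measure_zero
    refine measure_mono_null (fun x hx => ?_ : S ∩ Iic 0 ⊆ {0}) (measure_singleton 0)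
    have h1 := (hS hx.1).1
    have h2 : x ≤ 0 := hx.2
    simp only [mem_singleton_iff]
    linarith
  have hf1 : f 1 = ∫ x in S, g x := by
    show (∫ x in S ∩ Iic (1:ℝ), g x) = _
    rw [show S ∩ Iic (1:ℝ) = S from inter_eq_left.2 fun x hx => mem_Iic.mpr (hS hx).2]
  have : c ∈ f '' Icc 0 1 := by
    apply intermediate_value_Icc zero_le_one hlip.continuous.continuousOn
    rw [hf0, hf1]; exact ⟨hc0, hc⟩
  obtain ⟨t, _, hft⟩ := this
  exact ⟨S ∩ Iic t, hSm.inter measurableSet_Iic, inter_subset_left, hft⟩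

/-- Swapping pieces `P ⊆ A i`, `Q ⊆ A j` yields a Pareto improvement when agent `i`
strictly prefers `Q` to `P` and agent `j` weakly prefers `P` to `Q`. -/
lemma swap_improves (A : Fin 3 → Set ℝ)
    (hmeas : ∀ i, MeasurableSet (A i)) (hsub : ∀ i, A i ⊆ Icc 0 1)
    (hcov : volume (Icc (0 : ℝ) 1 \ ⋃ i, A i) = 0)
    (hdisj : ∀ i j, i ≠ j → volume (A i ∩ A j) = 0)
    (i j : Fin 3) (hij : i ≠ j) (P Q : Set ℝ)
    (hPm : MeasurableSet P) (hQm : MeasurableSet Q)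
    (hP : P ⊆ A i) (hQ : Q ⊆ A j)
    (h1 : (∫ x in P, dens i x) < ∫ x in Q, dens i x)
    (h2 : (∫ x in Q, dens j x) ≤ ∫ x in P, dens j x) :
    ∃ B : Fin 3 → Set ℝ,
      (∀ i, MeasurableSet (B i)) ∧ (∀ i, B i ⊆ Icc 0 1) ∧
      volume (Icc (0 : ℝ) 1 \ ⋃ i, B i) = 0 ∧
      (∀ i j, i ≠ j → volume (B i ∩ B j) = 0) ∧
      (∀ i, (∫ x in A i, dens i x) ≤ ∫ x in B i, dens i x) ∧
      (∃ i, (∫ x in A i, dens i x) < ∫ x in B i, dens i x) := by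
  classical
  set B : Fin 3 → Set ℝ :=
    fun k => if k = i then (A i \ P) ∪ Q else if k = j then (A j \ Q) ∪ P else A k with hB
  have hBm : ∀ k, MeasurableSet (B k) := by
    intro k
    rw [hB]
    dsimp only
    split_ifs <;>
      first
      | exact ((hmeas i).diff hPm).union hQm
      | exact ((hmeas j).diff hQm).union hPm
      | exact hmeas k
  have hBsub : ∀ k, B k ⊆ Icc 0 1 := by
    intro k
    rw [hB]
    dsimp only
    split_ifs <;>
      first
      | exact union_subset ((diff_subset).trans (hsub i)) ((hQ).trans (hsub j))
      | exact union_subset ((diff_subset).trans (hsub j)) ((hP).trans (hsub i))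
      | exact hsub k
  have hBcov : volume (Icc (0 : ℝ) 1 \ ⋃ k, B k) = 0 := by
    refine measure_mono_null (fun x hx => ?_) hcov
    refine ⟨hx.1, fun hx2 => hx.2 ?_⟩
    obtain ⟨s, ⟨k, rfl⟩, hk⟩ := hx2
    by_cases hxP : x ∈ P
    · exact mem_iUnion.2 ⟨j, by simp [hB, hij.symm, hxP]⟩
    · by_cases hxQ : x ∈ Q
      · exact mem_iUnion.2 ⟨i, by simp [hB, hxQ]⟩
      · refine mem_iUnion.2 ⟨k, ?_⟩
        rw [hB]
        dsimp only
        split_ifs with e1 e2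
        · subst e1; exact Or.inl ⟨hk, hxP⟩
        · subst e2; exact Or.inl ⟨hk, hxQ⟩
        · exact hk
  have hBi : B i = (A i \ P) ∪ Q := by simp [hB]
  have hBj : B j = (A j \ Q) ∪ P := by simp [hB, hij.symm]
  have hBo : ∀ m, m ≠ i → m ≠ j → B m = A m := by
    intro m h1 h2; simp [hB, h1, h2]
  have hBdisj : ∀ k l, k ≠ l → volume (B k ∩ B l) = 0 := by
    have h_ij : volume (B i ∩ B j) = 0 := by
      rw [hBi, hBj]
      refine measure_mono_null (fun x hx => ?_ :
        _ ⊆ (A i ∩ A j) ∪ (A j ∩ A i)) (measure_union_null (hdisj i j hij) (hdisj j i hij.symm))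
      obtain ⟨h1 | h1, h2 | h2⟩ := hx
      · exact Or.inl ⟨h1.1, h2.1⟩
      · exact absurd h2 h1.2
      · exact absurd h1 h2.2
      · exact Or.inr ⟨hQ h1, hP h2⟩
    have h_io : ∀ l, l ≠ i → l ≠ j → volume (B i ∩ B l) = 0 := by
      intro l h1 h2
      rw [hBi, hBo l h1 h2]
      refine measure_mono_null (fun x hx => ?_ : _ ⊆ (A i ∩ A l) ∪ (A j ∩ A l))
        (measure_union_null (hdisj i l (Ne.symm h1)) (hdisj j l (Ne.symm h2)))
      obtain ⟨h3 | h3, h4⟩ := hx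
      · exact Or.inl ⟨h3.1, h4⟩
      · exact Or.inr ⟨hQ h3, h4⟩
    have h_jo : ∀ l, l ≠ i → l ≠ j → volume (B j ∩ B l) = 0 := by
      intro l h1 h2
      rw [hBj, hBo l h1 h2]
      refine measure_mono_null (fun x hx => ?_ : _ ⊆ (A j ∩ A l) ∪ (A i ∩ A l))
        (measure_union_null (hdisj j l (Ne.symm h2)) (hdisj i l (Ne.symm h1)))
      obtain ⟨h3 | h3, h4⟩ := hx
      · exact Or.inl ⟨h3.1, h4⟩
      · exact Or.inr ⟨hP h3, h4⟩
    have comm : ∀ k l, volume (B k ∩ B l) = volume (B l ∩ B k) := by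
      intro k l; rw [inter_comm]
    intro k l hkl
    by_cases hki : k = i <;> by_cases hkj : k = j <;> by_cases hli : l = i <;>
      by_cases hlj : l = j <;> subst_vars <;>
      first
        | exact absurd rfl hkl
        | exact absurd rfl hij
        | exact h_ij
        | exact (comm _ _).trans h_ij
        | exact h_io _ hli hlj
        | exact (comm _ _).trans (h_io _ hki hkj)
        | exact h_jo _ hli hlj
        | exact (comm _ _).trans (h_jo _ hki hkj)
        | (rw [hBo _ hki hkj, hBo _ hli hlj]; exact hdisj _ _ hkl)
  have hPIcc : P ⊆ Icc (0:ℝ) 1 := hP.trans (hsub i)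
  have hQIcc : Q ⊆ Icc (0:ℝ) 1 := hQ.trans (hsub j)
  have hvBi : (∫ x in B i, dens i x) =
      (∫ x in A i, dens i x) - (∫ x in P, dens i x) + ∫ x in Q, dens i x := by
    have hd1 : volume ((A i \ P) ∩ Q) = 0 :=
      measure_mono_null (fun x hx => mem_inter hx.1.1 (hQ hx.2)) (hdisj i j hij)
    rw [hBi, integral_union_ae hd1 (hQm.nullMeasurableSet) (dens_intOn i ((diff_subset).trans (hsub i)))
      (dens_intOn i hQIcc),
      integral_diff hPm (dens_intOn i (hsub i)) hP]
  have hvBj : (∫ x in B j, dens j x) =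
      (∫ x in A j, dens j x) - (∫ x in Q, dens j x) + ∫ x in P, dens j x := by
    have hd2 : volume ((A j \ Q) ∩ P) = 0 :=
      measure_mono_null (fun x hx => mem_inter hx.1.1 (hP hx.2)) (hdisj j i hij.symm)
    rw [hBj, integral_union_ae hd2 (hPm.nullMeasurableSet) (dens_intOn j ((diff_subset).trans (hsub j)))
      (dens_intOn j hPIcc),
      integral_diff hQm (dens_intOn j (hsub j)) hQ]
  refine ⟨B, hBm, hBsub, hBcov, hBdisj, fun k => ?_, ⟨i, by rw [hvBi]; linarith⟩⟩
  by_cases hk : k = i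
  · subst hk; rw [hvBi]; linarith
  · by_cases hk2 : k = j
    · subst hk2; rw [hvBj]; linarith
    · rw [hBo k hk hk2]
lemma int_F_dens1 :
    (∫ x in Ico (0:ℝ) (1/6) ∪ Ioc (5/6) 1, dens 1 x) = 4/9 := by
  have hd : Disjoint (Ico (0:ℝ) (1/6)) (Ioc (5/6) 1) := by
    rw [Set.disjoint_left]
    rintro x ⟨_, h2⟩ ⟨h3, _⟩
    linarith
  rw [setIntegral_union hd measurableSet_Ioc
    ((dens_cont 1).integrableOn_Icc.mono_set Ico_subset_Icc_self)
    ((dens_cont 1).integrableOn_Icc.mono_set Ioc_subset_Icc_self)]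
  have e1 : ∫ x in Ico (0:ℝ) (1/6), dens 1 x = ∫ x in Ico (0:ℝ) (1/6), (3/2 - 2*x) := by
    apply setIntegral_congr_fun measurableSet_Ico
    intro x hx
    simp only [mem_Ico] at hx
    have : min x (1-x) = x := min_eq_left (by linarith [hx.1, hx.2])
    simp [dens, this]
  have e2 : ∫ x in Ioc (5/6:ℝ) 1, dens 1 x = ∫ x in Ioc (5/6:ℝ) 1, (3/2 - 2*(1-x)) := by
    apply setIntegral_congr_fun measurableSet_Ioc
    intro x hx
    simp only [mem_Ioc] at hx
    have : min x (1-x) = 1-x := min_eq_right (by linarith [hx.1, hx.2])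
    simp [dens, this]
  rw [e1, e2, setIntegral_congr_set Ico_ae_eq_Ioc,
    ← intervalIntegral.integral_of_le (by norm_num : (0:ℝ) ≤ 1/6),
    ← intervalIntegral.integral_of_le (by norm_num : (5/6:ℝ) ≤ 1)]
  have i1 : ∫ x in (0:ℝ)..(1/6), (3/2 - 2*x) = 2/9 := by
    rw [intervalIntegral.integral_sub intervalIntegrable_const
      (intervalIntegral.intervalIntegrable_id.const_mul 2)]
    rw [intervalIntegral.integral_const_mul, integral_id]
    norm_num
  have i2 : ∫ x in (5/6:ℝ)..1, (3/2 - 2*(1-x)) = 2/9 := by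
    have h : ∀ x:ℝ, 3/2 - 2*(1-x) = -1/2 + 2*x := by intro x; ring
    simp only [h]
    rw [intervalIntegral.integral_add intervalIntegrable_const
      (intervalIntegral.intervalIntegrable_id.const_mul 2)]
    rw [intervalIntegral.integral_const_mul, integral_id]
    norm_num
  rw [i1, i2]; norm_num

def Fset : Set ℝ := Ico 0 (1/6) ∪ Ioc (5/6) 1
def Gset : Set ℝ := Ioo (1/6) (5/6)

lemma Fset_meas : MeasurableSet Fset := measurableSet_Ico.union measurableSet_Ioc
lemma Gset_meas : MeasurableSet Gset := measurableSet_Ioo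
lemma Fset_sub : Fset ⊆ Icc 0 1 := by
  rintro x (h | h) <;> exact ⟨by linarith [h.1, h.2], by linarith [h.1, h.2]⟩
lemma Gset_sub : Gset ⊆ Icc 0 1 := by
  rintro x h; exact ⟨by linarith [h.1], by linarith [h.2]⟩
lemma Fset_min {x : ℝ} (hx : x ∈ Fset) : min x (1-x) < 1/6 := by
  rcases hx with h | h
  · exact lt_of_le_of_lt (min_le_left _ _) h.2
  · exact lt_of_le_of_lt (min_le_right _ _) (by linarith [h.1])
lemma Gset_min {x : ℝ} (hx : x ∈ Gset) : 1/6 ≤ min x (1-x) :=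
  le_min (le_of_lt hx.1) (by linarith [hx.2])
lemma notF_min {x : ℝ} (hx : x ∈ Icc (0:ℝ) 1) (hF : x ∉ Fset) : 1/6 ≤ min x (1-x) := by
  simp only [Fset, mem_union, mem_Ico, mem_Ioc, not_or, not_and, not_lt, not_le] at hF
  have h1 : 1/6 ≤ x := hF.1 hx.1
  have h2 : x ≤ 5/6 := by
    by_contra h
    push_neg at h
    linarith [hF.2 h, hx.2]
  exact le_min h1 (by linarith)
lemma Fset_vol : volume Fset = ENNReal.ofReal (1/3) := by
  rw [Fset, measure_union ?_ measurableSet_Ioc]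
  · rw [Real.volume_Ico, Real.volume_Ioc, ← ENNReal.ofReal_add (by norm_num) (by norm_num)]
    norm_num
  · rw [Set.disjoint_left]
    rintro x ⟨_, h2⟩ ⟨h3, _⟩
    linarith

lemma aux_swap (A : Fin 3 → Set ℝ)
    (hmeas : ∀ i, MeasurableSet (A i)) (hsub : ∀ i, A i ⊆ Icc 0 1)
    (hcov : volume (Icc (0 : ℝ) 1 \ ⋃ i, A i) = 0)
    (hdisj : ∀ i j, i ≠ j → volume (A i ∩ A j) = 0)
    (j : Fin 3) (hj : (0 : Fin 3) ≠ j) (r : ℝ)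
    (hF : ∀ x ∈ Fset, 0 < dens 0 x - r * dens j x)
    (hG : ∀ x ∈ Gset, dens 0 x ≤ r * dens j x)
    (h0 : volume (A 0 ∩ Gset) ≠ 0) (h1 : volume (A j ∩ Fset) ≠ 0) :
    ∃ B : Fin 3 → Set ℝ,
      (∀ i, MeasurableSet (B i)) ∧ (∀ i, B i ⊆ Icc 0 1) ∧
      volume (Icc (0 : ℝ) 1 \ ⋃ i, B i) = 0 ∧
      (∀ i j, i ≠ j → volume (B i ∩ B j) = 0) ∧
      (∀ i, (∫ x in A i, dens i x) ≤ ∫ x in B i, dens i x) ∧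
      (∃ i, (∫ x in A i, dens i x) < ∫ x in B i, dens i x) := by
  have hSm : MeasurableSet (A 0 ∩ Gset) := (hmeas 0).inter Gset_meas
  have hTm : MeasurableSet (A j ∩ Fset) := (hmeas j).inter Fset_meas
  have hSIcc : A 0 ∩ Gset ⊆ Icc 0 1 := inter_subset_left.trans (hsub 0)
  have hTIcc : A j ∩ Fset ⊆ Icc 0 1 := inter_subset_left.trans (hsub j)
  have hc1 : 0 < ∫ x in A 0 ∩ Gset, dens j x :=
    setIntegral_pos hSm hSIcc (fun x _ => dens_pos j x) h0 (dens_intOn j hSIcc)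
  have hc2 : 0 < ∫ x in A j ∩ Fset, dens j x :=
    setIntegral_pos hTm hTIcc (fun x _ => dens_pos j x) h1 (dens_intOn j hTIcc)
  set c := min (∫ x in A 0 ∩ Gset, dens j x) (∫ x in A j ∩ Fset, dens j x) with hc
  have hcpos : 0 < c := lt_min hc1 hc2
  obtain ⟨P, hPm, hPsub, hPint⟩ := exists_subset_integral (dens j) (dens_cont j)
    (fun x => (dens_pos j x).le) (fun x hx => dens_le_two j hx) hSm hSIcc hcpos.le
    (min_le_left _ _)
  obtain ⟨Q, hQm, hQsub, hQint⟩ := exists_subset_integral (dens j) (dens_cont j)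
    (fun x => (dens_pos j x).le) (fun x hx => dens_le_two j hx) hTm hTIcc hcpos.le
    (min_le_right _ _)
  have hPIcc : P ⊆ Icc (0:ℝ) 1 := hPsub.trans hSIcc
  have hQIcc : Q ⊆ Icc (0:ℝ) 1 := hQsub.trans hTIcc
  have hQvol : volume Q ≠ 0 := by
    intro h
    rw [setIntegral_measure_zero _ h] at hQint
    exact hcpos.ne' hQint.symm
  have key1 : (∫ x in P, dens 0 x) ≤ r * c := by
    calc (∫ x in P, dens 0 x) ≤ ∫ x in P, r * dens j x :=
          setIntegral_mono_on (dens_intOn 0 hPIcc) ((dens_intOn j hPIcc).const_mul r) hPm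
            (fun x hx => by
              have := hG x (hPsub hx).2
              linarith)
      _ = r * ∫ x in P, dens j x := integral_const_mul r _
      _ = r * c := by rw [hPint]
  have key2 : r * c < ∫ x in Q, dens 0 x := by
    have hpos : 0 < ∫ x in Q, (dens 0 x - r * dens j x) :=
      setIntegral_pos hQm hQIcc (fun x hx => hF x (hQsub hx).2) hQvol
        ((dens_intOn 0 hQIcc).sub ((dens_intOn j hQIcc).const_mul r))
    rw [integral_sub (dens_intOn 0 hQIcc) ((dens_intOn j hQIcc).const_mul r),
      integral_const_mul, hQint] at hpos
    linarith
  exact swap_improves A hmeas hsub hcov hdisj 0 j hj P Q hPm hQm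
    (hPsub.trans inter_subset_left) (hQsub.trans inter_subset_left)
    (by linarith) (le_of_eq (hQint.trans hPint.symm))

/-- In the 3-agent cake instance with densities `dens`, no allocation into
three measurable pieces of `[0,1]` is simultaneously balanced (each piece of
Lebesgue measure `1/3`), envy-free w.r.t. the subjective utilities, and
Pareto optimal w.r.t. the subjective utilities. -/
theorem stmt_16 :
    ¬ ∃ A : Fin 3 → Set ℝ,
      (∀ i, MeasurableSet (A i)) ∧ (∀ i, A i ⊆ Icc 0 1) ∧
      volume (Icc (0 : ℝ) 1 \ ⋃ i, A i) = 0 ∧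
      (∀ i j, i ≠ j → volume (A i ∩ A j) = 0) ∧
      -- balanced
      (∀ i, volume (A i) = ENNReal.ofReal (1 / 3)) ∧
      -- envy-free
      (∀ i j, (∫ x in A j, dens i x) ≤ ∫ x in A i, dens i x) ∧
      -- Pareto optimal
      ¬ ∃ B : Fin 3 → Set ℝ,
        (∀ i, MeasurableSet (B i)) ∧ (∀ i, B i ⊆ Icc 0 1) ∧
        volume (Icc (0 : ℝ) 1 \ ⋃ i, B i) = 0 ∧
        (∀ i j, i ≠ j → volume (B i ∩ B j) = 0) ∧
        (∀ i, (∫ x in A i, dens i x) ≤ ∫ x in B i, dens i x) ∧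
        (∃ i, (∫ x in A i, dens i x) < ∫ x in B i, dens i x) := by
  rintro ⟨A, hmeas, hsub, hcov, hdisj, hbal, hef, hpo⟩
  -- pointwise comparison facts
  have hF1 : ∀ x ∈ Fset, 0 < dens 0 x - (22/21) * dens 1 x := by
    intro x hx
    have hm := Fset_min hx
    rw [dens0_apply, dens1_apply]
    set m := min x (1-x)
    linarith
  have hG1 : ∀ x ∈ Gset, dens 0 x ≤ (22/21) * dens 1 x := by
    intro x hx
    have hm := Gset_min hx
    rw [dens0_apply, dens1_apply]
    set m := min x (1-x)
    linarith
  have hF2 : ∀ x ∈ Fset, 0 < dens 0 x - (11/9) * dens 2 x := by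
    intro x hx
    have hm := Fset_min hx
    rw [dens0_apply, dens2_apply]
    set m := min x (1-x)
    linarith
  have hG2 : ∀ x ∈ Gset, dens 0 x ≤ (11/9) * dens 2 x := by
    intro x hx
    have hm := Gset_min hx
    rw [dens0_apply, dens2_apply]
    set m := min x (1-x)
    linarith
  -- Step A : A 0 is (a.e.) disjoint from the middle Gset
  have hA0G : volume (A 0 ∩ Gset) = 0 := by
    by_contra h0
    have h1 : volume (A 1 ∩ Fset) = 0 := by
      by_contra h1
      exact hpo (aux_swap A hmeas hsub hcov hdisj 1 (by decide) (22/21) hF1 hG1 h0 h1)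
    have h2 : volume (A 2 ∩ Fset) = 0 := by
      by_contra h2
      exact hpo (aux_swap A hmeas hsub hcov hdisj 2 (by decide) (11/9) hF2 hG2 h0 h2)
    have hFA0 : volume (Fset \ A 0) = 0 := by
      refine measure_mono_null (fun x hx => ?_)
        (measure_union_null hcov (measure_union_null h1 h2))
      by_cases hxu : x ∈ ⋃ i, A i
      · obtain ⟨s, ⟨k, rfl⟩, hk⟩ := hxu
        fin_cases k
        · exact absurd hk hx.2
        · exact Or.inr (Or.inl ⟨hk, hx.1⟩)
        · exact Or.inr (Or.inr ⟨hk, hx.1⟩)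
      · exact Or.inl ⟨Fset_sub hx.1, hxu⟩
    have e1 : ENNReal.ofReal (1/3) ≤ volume (A 0 ∩ Fset) := by
      calc ENNReal.ofReal (1/3) = volume Fset := Fset_vol.symm
        _ ≤ volume (Fset ∩ A 0) + volume (Fset \ A 0) := measure_le_inter_add_diff _ _ _
        _ = volume (A 0 ∩ Fset) := by rw [hFA0, add_zero, inter_comm]
    have e2 : volume (A 0 ∩ Fset) + volume (A 0 ∩ Gset) ≤ volume (A 0) := by
      rw [← measure_union ?_ ((hmeas 0).inter Gset_meas)]
      · exact measure_mono (union_subset inter_subset_left inter_subset_left)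
      · refine Disjoint.mono inter_subset_right inter_subset_right ?_
        rw [Set.disjoint_left]
        rintro x hx1 hx2
        exact absurd (Gset_min hx2) (not_le.2 (Fset_min hx1))
    have e3 : ENNReal.ofReal (1/3) + volume (A 0 ∩ Gset) ≤ ENNReal.ofReal (1/3) := by
      calc ENNReal.ofReal (1/3) + volume (A 0 ∩ Gset)
          ≤ volume (A 0 ∩ Fset) + volume (A 0 ∩ Gset) := add_le_add e1 le_rfl
        _ ≤ volume (A 0) := e2
        _ = ENNReal.ofReal (1/3) := hbal 0
    exact h0 (le_zero_iff.1 (ENNReal.le_of_add_le_add_left (by simp)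
      (e3.trans_eq (add_zero _).symm)))
  -- Step B : A 0 coincides a.e. with Fset
  have hA0dF : volume (A 0 \ Fset) = 0 := by
    refine measure_mono_null (fun x hx => ?_)
      (measure_union_null hA0G (measure_union_null (measure_singleton (1/6:ℝ))
        (measure_singleton (5/6:ℝ))))
    have hxI := hsub 0 hx.1
    by_cases hx6 : x = 1/6
    · exact Or.inr (Or.inl hx6)
    · by_cases hx56 : x = 5/6
      · exact Or.inr (Or.inr hx56)
      · refine Or.inl ⟨hx.1, ?_, ?_⟩
        · exact lt_of_le_of_ne (notF_min hxI hx.2 |>.trans (min_le_left _ _)) (Ne.symm hx6)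
        · have := (notF_min hxI hx.2).trans (min_le_right _ _)
          exact lt_of_le_of_ne (by linarith) hx56
  have hA0F : volume (A 0 ∩ Fset) = ENNReal.ofReal (1/3) := by
    have := measure_inter_add_diff (μ := volume) (A 0) Fset_meas
    rw [hA0dF, add_zero] at this
    rw [this, hbal 0]
  have hFA0 : volume (Fset \ A 0) = 0 := by
    have hd : volume (Fset \ (Fset ∩ A 0)) = volume Fset - volume (Fset ∩ A 0) :=
      measure_diff inter_subset_left ((Fset_meas.inter (hmeas 0)).nullMeasurableSet)
        (by rw [inter_comm, hA0F]; simp)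
    rw [diff_self_inter] at hd
    rw [hd, inter_comm, hA0F, Fset_vol, tsub_self]
  have hA1F : volume (A 1 ∩ Fset) = 0 := by
    refine measure_mono_null (fun x hx => ?_)
      (measure_union_null (hdisj 1 0 (by decide)) hFA0)
    by_cases hx0 : x ∈ A 0
    · exact Or.inl ⟨hx.1, hx0⟩
    · exact Or.inr ⟨hx.2, hx0⟩
  -- final envy computation
  have hae : A 0 =ᵐ[volume] Fset := by
    rw [MeasureTheory.ae_eq_set]
    exact ⟨hA0dF, hFA0⟩
  have hint0 : (∫ x in A 0, dens 1 x) = 4/9 :=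
    (setIntegral_congr_set hae).trans int_F_dens1
  have hae1 : A 1 =ᵐ[volume] (A 1 \ Fset : Set ℝ) := by
    rw [MeasureTheory.ae_eq_set]
    constructor
    · refine measure_mono_null (fun x hx => (?_ : x ∈ A 1 ∩ Fset)) hA1F
      rcases hx with ⟨hx1, hx2⟩
      refine ⟨hx1, ?_⟩
      by_contra hxF
      exact hx2 ⟨hx1, hxF⟩
    · refine measure_mono_null (fun x hx => (?_ : x ∈ (∅ : Set ℝ))) measure_empty
      exact absurd hx.1.1 hx.2
  have hub : (∫ x in A 1, dens 1 x) ≤ 7/18 := by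
    rw [setIntegral_congr_set hae1]
    have hsub1 : A 1 \ Fset ⊆ Icc (0:ℝ) 1 := diff_subset.trans (hsub 1)
    have hle : (∫ x in A 1 \ Fset, dens 1 x) ≤ ∫ x in A 1 \ Fset, (7/6 : ℝ) := by
      refine setIntegral_mono_on (dens_intOn 1 hsub1) (integrableOn_const ?_)
        ((hmeas 1).diff Fset_meas) (fun x hx => ?_)
      · exact (lt_of_le_of_lt (measure_mono hsub1) (by simp)).ne
      · have hm := notF_min (hsub1 hx) hx.2
        rw [dens1_apply]
        set m := min x (1-x)
        linarith
    have hvle : (volume (A 1 \ Fset)).toReal ≤ 1/3 := by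
      have h : volume (A 1 \ Fset) ≤ volume (A 1) := measure_mono diff_subset
      rw [hbal 1] at h
      have := ENNReal.toReal_mono (by simp) h
      rwa [ENNReal.toReal_ofReal (by norm_num)] at this
    rw [setIntegral_const, smul_eq_mul, measureReal_def] at hle
    have ht0 : (0:ℝ) ≤ (volume (A 1 \ Fset)).toReal := ENNReal.toReal_nonneg
    nlinarith
  have := hef 1 0
  rw [hint0] at this
  linarith
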